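/- Let n ≥ 3 be an integer and let a < b be real numbers. If the real parameters θ = (c, δ_0, …, δ_{n-2}) satisfy α_j^a = w_j^a for j = 0, 1, 2, then δ_{n-3} = (a+b)(b-a)^2 / (16(2n-1)). -/

import Mathlib

open Finset intervalIntegral

/-- Hermite quadrature weight at `a`:
`w_j^a = (b-a)^(j+1) * n * Σ_{k=j}^{n-1} C(k,j) (n+k-j-1)!/(n+k+1)!`. -/
noncomputable def wA (n : ℕ) (a b : ℝ) (j : ℕ) : ℝ :=
  (b - a) ^ (j + 1) * n * ∑ k ∈ Finset.Icc j (n - 1),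
    (k.choose j : ℝ) * (Nat.factorial (n + k - j - 1)) / (Nat.factorial (n + k + 1))

/-- Hermite quadrature weight at `b`: `w_j^b = (-1)^j w_j^a`. -/
noncomputable def wB (n : ℕ) (a b : ℝ) (j : ℕ) : ℝ := (-1 : ℝ) ^ j * wA n a b j

/-- RIBP weight at `a`:
`α_j^a = (-1)^(j+1) [ (a+c)^(j+1)/(j+1)! + Σ_{i=0}^{j-1} δ_{i+n-1-j} a^i/i! ]`. -/
noncomputable def alphaA (n : ℕ) (a c : ℝ) (δ : ℕ → ℝ) (j : ℕ) : ℝ :=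
  (-1 : ℝ) ^ (j + 1) * ((a + c) ^ (j + 1) / (Nat.factorial (j + 1)) +
    ∑ i ∈ Finset.range j, δ (i + n - 1 - j) * a ^ i / (Nat.factorial i))

/-- RIBP weight at `b`:
`α_j^b = (-1)^j [ (b+c)^(j+1)/(j+1)! + Σ_{i=0}^{j-1} δ_{i+n-1-j} b^i/i! ]`. -/
noncomputable def alphaB (n : ℕ) (b c : ℝ) (δ : ℕ → ℝ) (j : ℕ) : ℝ :=
  (-1 : ℝ) ^ j * ((b + c) ^ (j + 1) / (Nat.factorial (j + 1)) +
    ∑ i ∈ Finset.range j, δ (i + n - 1 - j) * b ^ i / (Nat.factorial i))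

/-- Polynomial kernel `P(x,θ) = (x+c)^n/n! + Σ_{i=0}^{n-2} δ_i x^i/i!`. -/
noncomputable def Pker (n : ℕ) (c : ℝ) (δ : ℕ → ℝ) (x : ℝ) : ℝ :=
  (x + c) ^ n / (Nat.factorial n) + ∑ i ∈ Finset.range (n - 1), δ i * x ^ i / (Nat.factorial i)

lemma tele (f : ℕ → ℝ) (a N : ℕ) :
    ∑ k ∈ Finset.Icc a (a + N), (f k - f (k+1)) = f a - f (a + N + 1) := by
  induction N with
  | zero => simp
  | succ N ih =>
      rw [show a + (N+1) = (a + N) + 1 from rfl,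
        Finset.sum_Icc_succ_top (by omega), ih]
      ring

lemma sum0 (m : ℕ) : ∑ k ∈ Finset.Icc 0 (m+2),
    ((Nat.choose k 0 : ℝ) * (Nat.factorial (3 + m + k - 0 - 1)) / (Nat.factorial (3 + m + k + 1)))
    = 1/(2*((m:ℝ)+3)) := by
  have h : ∑ k ∈ Finset.Icc 0 (0+(m+2)),
      ((fun k : ℕ => 1/((m:ℝ)+k+3)) k - (fun k : ℕ => 1/((m:ℝ)+k+3)) (k+1))
      = 1/((m:ℝ)+3) - 1/((m:ℝ)+(m+3)+3) := by
    rw [tele]; push_cast; ring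
  rw [show (0:ℕ)+(m+2) = m+2 from by omega] at h
  rw [Finset.sum_congr rfl (fun k hk => ?_), h]
  · field_simp; ring
  · have e1 : 3+m+k-0-1 = m+k+2 := by omega
    have e2 : 3+m+k+1 = m+k+4 := by omega
    rw [e1, e2, Nat.choose_zero_right]
    have hf : Nat.factorial (m+k+4) = (m+k+4)*((m+k+3)*Nat.factorial (m+k+2)) := by
      rw [show m+k+4 = (m+k+3)+1 from rfl, Nat.factorial_succ,
          show m+k+3 = (m+k+2)+1 from rfl, Nat.factorial_succ]
    rw [hf]
    have hp : (0:ℝ) < Nat.factorial (m+k+2) := by positivity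
    push_cast
    field_simp
    ring

lemma sum1 (m : ℕ) : ∑ k ∈ Finset.Icc 1 (m+2),
    ((Nat.choose k 1 : ℝ) * (Nat.factorial (3 + m + k - 1 - 1)) / (Nat.factorial (3 + m + k + 1)))
    = ((m:ℝ)+2)/(4*((m:ℝ)+3)*(2*(m:ℝ)+5)) := by
  set f : ℕ → ℝ := fun k => (2*(k:ℝ)+(m:ℝ)+2)/(2*((m:ℝ)+k+2)*((m:ℝ)+k+3)) with hfdef
  have h : ∑ k ∈ Finset.Icc 1 (1+(m+1)), (f k - f (k+1)) = f 1 - f (1+(m+1)+1) := tele f 1 (m+1)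
  rw [show (1:ℕ)+(m+1) = m+2 from by omega] at h
  rw [Finset.sum_congr rfl (fun k hk => ?_), h]
  · simp only [hfdef]; push_cast; field_simp; ring
  · have e1 : 3+m+k-1-1 = m+k+1 := by omega
    have e2 : 3+m+k+1 = m+k+4 := by omega
    rw [e1, e2, Nat.choose_one_right]
    have hf : Nat.factorial (m+k+4)
        = (m+k+4)*((m+k+3)*((m+k+2)*Nat.factorial (m+k+1))) := by
      rw [show m+k+4 = (m+k+3)+1 from rfl, Nat.factorial_succ,
          show m+k+3 = (m+k+2)+1 from rfl, Nat.factorial_succ,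
          show m+k+2 = (m+k+1)+1 from rfl, Nat.factorial_succ]
    rw [hf]
    have hp : (0:ℝ) < Nat.factorial (m+k+1) := by positivity
    simp only [hfdef]
    push_cast
    field_simp
    ring

lemma sum2 (m : ℕ) : ∑ k ∈ Finset.Icc 2 (m+2),
    ((Nat.choose k 2 : ℝ) * (Nat.factorial (3 + m + k - 2 - 1)) / (Nat.factorial (3 + m + k + 1)))
    = ((m:ℝ)+1)/(24*((m:ℝ)+3)*(2*(m:ℝ)+5)) := by
  set f : ℕ → ℝ := fun k => (3*(k:ℝ)^2+3*((m:ℝ)+1)*k+((m:ℝ)+2)*((m:ℝ)+1))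
      /(6*((m:ℝ)+k+1)*((m:ℝ)+k+2)*((m:ℝ)+k+3)) with hfdef
  have h : ∑ k ∈ Finset.Icc 2 (2+m), (f k - f (k+1)) = f 2 - f (2+m+1) := tele f 2 m
  rw [show (2:ℕ)+m = m+2 from by omega] at h
  rw [Finset.sum_congr rfl (fun k hk => ?_), h]
  · simp only [hfdef]; push_cast; field_simp; ring
  · have hk2 : 2 ≤ k := (Finset.mem_Icc.mp hk).1
    obtain ⟨l, rfl⟩ := Nat.exists_eq_add_of_le hk2
    have hch : ((Nat.choose (2+l) 2 : ℕ) : ℝ) = ((2+l:ℕ):ℝ)*((1+l:ℕ):ℝ)/2 := by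
      rw [Nat.choose_two_right]
      have hd : 2 ∣ (2+l)*(2+l-1) := by
        rw [show 2+l-1 = (1+l) from by omega]
        have := Nat.even_mul_succ_self (1+l)
        rw [show (1+l)*((1+l)+1) = (2+l)*(1+l) from by ring] at this
        exact this.two_dvd
      rw [Nat.cast_div hd (by norm_num)]
      rw [show 2+l-1 = (1+l) from by omega]
      push_cast; ring
    have e1 : 3+m+(2+l)-2-1 = m+(2+l) := by omega
    have e2 : 3+m+(2+l)+1 = m+(2+l)+4 := by omega
    rw [e1, e2, hch]
    set q := m+(2+l) with hq
    have hf : Nat.factorial (q+4)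
        = (q+4)*((q+3)*((q+2)*((q+1)*Nat.factorial q))) := by
      rw [show q+4 = (q+3)+1 from rfl, Nat.factorial_succ,
          show q+3 = (q+2)+1 from rfl, Nat.factorial_succ,
          show q+2 = (q+1)+1 from rfl, Nat.factorial_succ, Nat.factorial_succ]
    rw [hf]
    have hp : (0:ℝ) < Nat.factorial q := by positivity
    simp only [hfdef, hq]
    push_cast
    field_simp
    ring

/-- if `α_j^a = w_j^a` for `j = 0, 1, 2`, then
`δ_{n-3} = (a+b)(b-a)²/(16(2n-1))`. -/
theorem stmt11 (n : ℕ) (hn : 3 ≤ n) (a b : ℝ) (hab : a < b) (c : ℝ) (δ : ℕ → ℝ)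
    (h0 : alphaA n a c δ 0 = wA n a b 0) (h1 : alphaA n a c δ 1 = wA n a b 1)
    (h2 : alphaA n a c δ 2 = wA n a b 2) :
    δ (n - 3) = (a + b) * (b - a) ^ 2 / (16 * (2 * (n : ℝ) - 1)) := by
  obtain ⟨m, rfl⟩ := Nat.exists_eq_add_of_le hn
  have hr : 3 + m - 1 = m + 2 := by omega
  simp only [alphaA, wA, hr] at h0 h1 h2
  rw [sum0 m] at h0
  rw [sum1 m] at h1
  rw [sum2 m] at h2
  simp only [Finset.sum_range_zero, Finset.sum_range_succ, Finset.sum_range_one] at h0 h1 h2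
  norm_num at h0 h1 h2
  rw [show 3+m-2 = 1+m from by omega] at h2
  rw [show 3+m-3 = m from by omega]
  push_cast
  have hm3 : ((m:ℝ)+3) ≠ 0 := by positivity
  have hD : (2*(m:ℝ)+5) ≠ 0 := by positivity
  rw [show (b-a)*(3+(m:ℝ))*(((m:ℝ)+3)⁻¹*(1/2)) = (b-a)/2 from by field_simp; ring] at h0
  rw [show (b-a)^2*(3+(m:ℝ))*(((m:ℝ)+2)/(4*((m:ℝ)+3)*(2*(m:ℝ)+5)))
      = (b-a)^2*((m:ℝ)+2)/(4*(2*(m:ℝ)+5)) from by field_simp; ring] at h1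
  rw [show (b-a)^3*(3+(m:ℝ))*(((m:ℝ)+1)/(24*((m:ℝ)+3)*(2*(m:ℝ)+5)))
      = (b-a)^3*((m:ℝ)+1)/(24*(2*(m:ℝ)+5)) from by field_simp; ring] at h2
  have hc : a + c = (a-b)/2 := by linarith
  rw [hc] at h1 h2
  have hgoal : (a + b) * (b - a) ^ 2 / (16 * (2 * (3+(m:ℝ)) - 1))
      = (a + b) * (b - a) ^ 2 / (16 * (2*(m:ℝ)+5)) := by ring_nf
  rw [hgoal]
  have hd1 : δ (1+m) = -((b-a)^2)/(8*(2*(m:ℝ)+5)) := by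
    have e : (b-a)^2*((m:ℝ)+2)/(4*(2*(m:ℝ)+5)) - ((a-b)/2)^2/2
        = -((b-a)^2)/(8*(2*(m:ℝ)+5)) := by field_simp; ring
    linarith
  rw [hd1] at h2
  have key : -(-((b-a)^2)/(8*(2*(m:ℝ)+5))*a) - ((a-b)/2)^3/6
        - (b-a)^3*((m:ℝ)+1)/(24*(2*(m:ℝ)+5))
      = (a+b)*(b-a)^2/(16*(2*(m:ℝ)+5)) := by field_simp; ring
  linarith
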